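/- Suppose that for each η = (η₁, η₂) ∈ [−π, π]², Ψ̃_η : Ω → ℂ is analytic on Ω and satisfies Ψ̃_η(z) = φ_η(z)/φ(z) for all z ∈ Ω ∖ (S + Λ), where φ_η(z) = ∑_{m∈Λ} e^{−i(η₁ m₁ + η₂ m₂)} ϕ(z − m). Then there exist constants β > 0 and C > 0 such that for every η ∈ [−π, π]²: |Ψ̃_η(z)| ≤ C for all z ∈ Ω, and |Ψ̃_η(z) − 1| ≤ C (η₁² + η₂²)^{β/2} for all z ∈ ϖ. -/

import Mathlib

open Complex MeasureTheory Set Filter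

noncomputable section

/-- The Gaussian integer lattice point associated to a pair of integers. -/
def latPt (p : ℤ × ℤ) : ℂ := (p.1 : ℂ) + (p.2 : ℂ) * Complex.I

/-- The open unit square `Q = (0,1) × (0,1)` in `ℂ`. -/
def QSet : Set ℂ := {z : ℂ | z.re ∈ Set.Ioo (0:ℝ) 1 ∧ z.im ∈ Set.Ioo (0:ℝ) 1}

/-- The set `S + Λ` of all translates of points of `S` by lattice points. -/
def SLat (S : Finset ℂ) : Set ℂ := {z : ℂ | ∃ s ∈ S, ∃ p : ℤ × ℤ, z = s + latPt p}

open Topology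
set_option maxHeartbeats 1000000

lemma latPt_re (p : ℤ × ℤ) : (latPt p).re = p.1 := by simp [latPt]
lemma latPt_im (p : ℤ × ℤ) : (latPt p).im = p.2 := by simp [latPt]
lemma latPt_neg (p : ℤ × ℤ) : latPt (-p) = - latPt p := by
  simp [latPt]; push_cast; ring
lemma latPt_sub (p q : ℤ × ℤ) : latPt (p - q) = latPt p - latPt q := by
  simp [latPt]; push_cast; ring
lemma latPt_zero : latPt 0 = 0 := by simp [latPt]

lemma abs_latPt_sq (q : ℤ × ℤ) :
    (‖latPt q‖)^2 = ((q.1:ℝ))^2 + ((q.2:ℝ))^2 := by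
  rw [Complex.sq_norm, Complex.normSq_apply, latPt_re, latPt_im]; ring

lemma one_le_abs_latPt {q : ℤ × ℤ} (hq : q ≠ 0) : 1 ≤ ‖latPt q‖ := by
  have h1 : (1:ℤ) ≤ q.1^2 + q.2^2 := by
    rcases (Prod.mk.injEq q.1 q.2 0 0) with _
    have : q.1 ≠ 0 ∨ q.2 ≠ 0 := by
      by_contra h; push_neg at h
      exact hq (Prod.ext h.1 h.2)
    rcases this with h | h
    · nlinarith [sq_nonneg q.2, Int.one_le_abs h, _root_.sq_abs q.1, sq_nonneg (|q.1| - 1)]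
    · nlinarith [sq_nonneg q.1, Int.one_le_abs h, _root_.sq_abs q.2, sq_nonneg (|q.2| - 1)]
  have h2 : (1:ℝ) ≤ ((q.1:ℝ))^2 + ((q.2:ℝ))^2 := by exact_mod_cast h1
  nlinarith [abs_latPt_sq q, norm_nonneg (latPt q)]

lemma isOpen_QSet : IsOpen QSet := by
  have : QSet = Complex.re ⁻¹' (Set.Ioo 0 1) ∩ Complex.im ⁻¹' (Set.Ioo 0 1) := rfl
  rw [this]
  exact (isOpen_Ioo.preimage Complex.continuous_re).inter
    (isOpen_Ioo.preimage Complex.continuous_im)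

lemma countable_SLat (S : Finset ℂ) : (SLat S).Countable := by
  have : SLat S = ⋃ s ∈ (S : Set ℂ), Set.range (fun p : ℤ × ℤ => s + latPt p) := by
    ext z; simp [SLat, eq_comm]
  rw [this]
  exact S.countable_toSet.biUnion (fun s _ => Set.countable_range _)

lemma summable_int_aux {r : ℝ} (hr : 1 < r) :
    Summable (fun a : ℤ => ((1:ℝ) + |(a:ℝ)|) ^ (-r)) := by
  have h1 : Summable (fun a : ℤ => |(a:ℝ)| ^ (-r)) := Real.summable_abs_int_rpow hr
  have h2 : Summable (fun a : ℤ => if a = 0 then (1:ℝ) else 0) := by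
    apply summable_of_ne_finset_zero (s := {0})
    intro a ha
    simp only [Finset.mem_singleton] at ha
    simp [ha]
  apply Summable.of_nonneg_of_le (fun a => Real.rpow_nonneg (by positivity) _)
    (fun a => ?_) (h2.add h1)
  by_cases ha : a = 0
  · subst ha
    simp [Real.one_rpow, Real.rpow_nonneg]
  · have h0 : (0:ℝ) < |(a:ℝ)| := by
      simp only [abs_pos]
      exact_mod_cast ha
    have : ((1:ℝ)+|(a:ℝ)|)^(-r) ≤ |(a:ℝ)|^(-r) :=
      Real.rpow_le_rpow_of_nonpos h0 (by linarith) (by linarith)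
    simp only [ha, if_false, zero_add]
    linarith

lemma summable_G {r : ℝ} (hr : 1 < r) :
    Summable (fun q : ℤ × ℤ => ((1:ℝ)+|(q.1:ℝ)|)^(-r) * ((1:ℝ)+|(q.2:ℝ)|)^(-r)) :=
  (summable_int_aux hr).mul_of_nonneg (summable_int_aux hr)
    (fun _ => Real.rpow_nonneg (by positivity) _)
    (fun _ => Real.rpow_nonneg (by positivity) _)

lemma G_nonneg {r : ℝ} (q : ℤ × ℤ) :
    0 ≤ ((1:ℝ)+|(q.1:ℝ)|)^(-r) * ((1:ℝ)+|(q.2:ℝ)|)^(-r) := by positivity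

lemma G_bound {s : ℝ} (hs : 0 < s) (q : ℤ × ℤ) :
    ((1:ℝ) + ‖latPt q‖) ^ (-s) ≤
      ((1:ℝ)+|(q.1:ℝ)|)^(-(s/2)) * ((1:ℝ)+|(q.2:ℝ)|)^(-(s/2)) := by
  set t := ‖latPt q‖ with htdef
  set a := |(q.1:ℝ)| with hadef
  set c := |(q.2:ℝ)| with hcdef
  have ht : 0 ≤ t := norm_nonneg _
  have ha : 0 ≤ a := abs_nonneg _
  have hc : 0 ≤ c := abs_nonneg _
  have htsq : t^2 = a^2 + c^2 := by
    rw [htdef, abs_latPt_sq, hadef, hcdef, _root_.sq_abs, _root_.sq_abs]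
  have hsum2 : a + c ≤ 2*t := by
    have h1 : (a+c)^2 ≤ (2*t)^2 := by nlinarith [sq_nonneg (a-c)]
    nlinarith
  have key : ((1:ℝ)+a) * ((1:ℝ)+c) ≤ (1+t)^2 := by nlinarith [sq_nonneg (a-c)]
  have e1 : ((1:ℝ)+t)^(-s) = (((1:ℝ)+t)^((2:ℕ):ℝ))^(-(s/2)) := by
    rw [← Real.rpow_mul (by positivity)]
    ring_nf
  rw [e1, Real.rpow_natCast]
  calc (((1:ℝ)+t)^(2:ℕ))^(-(s/2)) ≤ (((1:ℝ)+a)*((1:ℝ)+c))^(-(s/2)) := by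
        apply Real.rpow_le_rpow_of_nonpos (by positivity) key (by linarith)
    _ = ((1:ℝ)+a)^(-(s/2)) * ((1:ℝ)+c)^(-(s/2)) :=
        Real.mul_rpow (by positivity) (by positivity)

lemma chain_ineq {t w : ℝ} (ht : 1 ≤ t) (hw : t - 2 ≤ w) (hw0 : 0 ≤ w) :
    (1+t)/4 ≤ 1 + w := by
  rcases le_or_gt t 3 with h | h
  · linarith
  · linarith

lemma min_le_rpow {u β : ℝ} (hu : 0 ≤ u) (hβ : 0 < β) (hβ1 : β ≤ 1) :
    min 1 u ≤ u ^ β := by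
  rcases eq_or_lt_of_le hu with h | h
  · rw [← h, Real.zero_rpow (ne_of_gt hβ)]
    simp
  rcases le_or_gt u 1 with h1 | h1
  · have : u ^ (1:ℝ) ≤ u ^ β := Real.rpow_le_rpow_of_exponent_ge h h1 hβ1
    rw [Real.rpow_one] at this
    exact le_trans (min_le_right _ _) this
  · have : (1:ℝ) ^ β ≤ u ^ β := Real.rpow_le_rpow (by norm_num) h1.le hβ.le
    rw [Real.one_rpow] at this
    exact le_trans (min_le_left _ _) this

lemma abs_exp_neg_I (θ : ℝ) : ‖Complex.exp (-Complex.I * (θ:ℂ))‖ = 1 := by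
  rw [Complex.norm_exp]
  have : (-Complex.I * (θ:ℂ)).re = 0 := by simp
  rw [this, Real.exp_zero]

lemma exp_sub_one_bound (θ : ℝ) :
    ‖Complex.exp (-Complex.I * (θ:ℂ)) - 1‖ ≤ 2 * min 1 |θ| := by
  have habs : ‖-Complex.I * (θ:ℂ)‖ = |θ| := by
    simp
  rcases le_or_gt |θ| 1 with h | h
  · have := Complex.norm_exp_sub_one_le (x := -Complex.I * (θ:ℂ)) (by rw [habs]; exact h)
    rw [habs] at this
    rwa [min_eq_right h]
  · rw [min_eq_left h.le]
    calc ‖Complex.exp (-Complex.I * (θ:ℂ)) - 1‖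
        ≤ ‖Complex.exp (-Complex.I * (θ:ℂ))‖ + ‖(1:ℂ)‖ :=
          (norm_sub_le _ _)
      _ = 2 * 1 := by rw [abs_exp_neg_I]; norm_num
      _ = 2 * 1 := by norm_num

lemma floor_unique {z : ℂ} {p : ℤ × ℤ} (h : z - latPt p ∈ QSet) :
    p = (⌊z.re⌋, ⌊z.im⌋) := by
  obtain ⟨⟨h1, h2⟩, h3, h4⟩ := h
  rw [Complex.sub_re, latPt_re] at h1 h2
  rw [Complex.sub_im, latPt_im] at h3 h4
  have e1 : ⌊z.re⌋ = p.1 := by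
    rw [Int.floor_eq_iff] <;> constructor <;> push_cast <;> linarith
  have e2 : ⌊z.im⌋ = p.2 := by
    rw [Int.floor_eq_iff] <;> constructor <;> push_cast <;> linarith
  exact Prod.ext e1.symm e2.symm

lemma abs_sub_floorPt (z : ℂ) :
    ‖z - latPt (⌊z.re⌋, ⌊z.im⌋)‖ ≤ 2 := by
  apply le_trans (Complex.norm_le_abs_re_add_abs_im _)
  rw [Complex.sub_re, Complex.sub_im, latPt_re, latPt_im]
  have h1 := Int.fract_nonneg z.re
  have h2 := Int.fract_lt_one z.re
  have h3 := Int.fract_nonneg z.im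
  have h4 := Int.fract_lt_one z.im
  rw [Int.fract] at h1 h2 h3 h4
  rw [_root_.abs_of_nonneg h1, _root_.abs_of_nonneg h3]
  linarith

lemma abs_le_two_of_mem_closure_QSet {w : ℂ} (hw : w ∈ closure QSet) :
    ‖w‖ ≤ 2 := by
  have hsub : closure QSet ⊆ {z : ℂ | z.re ∈ Set.Icc (0:ℝ) 1 ∧ z.im ∈ Set.Icc (0:ℝ) 1} := by
    apply closure_minimal
    · rintro z ⟨⟨a1, a2⟩, a3, a4⟩
      exact ⟨⟨a1.le, a2.le⟩, a3.le, a4.le⟩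
    · exact ((isClosed_Icc.preimage Complex.continuous_re).inter
        (isClosed_Icc.preimage Complex.continuous_im))
  obtain ⟨⟨a1, a2⟩, a3, a4⟩ := hsub hw
  apply le_trans (Complex.norm_le_abs_re_add_abs_im _)
  rw [_root_.abs_of_nonneg a1, _root_.abs_of_nonneg a3]
  linarith

def eFun (η : ℝ × ℝ) (p : ℤ × ℤ) : ℂ :=
  Complex.exp (-Complex.I * Complex.ofReal (η.1 * (latPt p).re + η.2 * (latPt p).im))

lemma abs_eFun (η : ℝ × ℝ) (p : ℤ × ℤ) : ‖eFun η p‖ = 1 := abs_exp_neg_I _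

lemma eFun_zero (η : ℝ × ℝ) : eFun η 0 = 1 := by
  simp [eFun, latPt_zero]

/-- uniform boundedness of `Ψ̃_η` on `Ω` and the Hölder-type estimate
`|Ψ̃_η - 1| ≤ C|η|^β` on the periodic cell `ϖ`. -/
theorem stmt7
    (Ω : Set ℂ) (hΩopen : IsOpen Ω) (hΩne : Ω.Nonempty)
    (hper : ∀ z ∈ Ω, ∀ p : ℤ × ℤ, z + latPt p ∈ Ω)
    (S : Finset ℂ) (hSQ : (S : Set ℂ) ⊆ QSet)
    (ϕ : ℂ → ℂ) (hmero : MeromorphicOn ϕ Set.univ)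
    (hana : AnalyticOnNhd ℂ ϕ ((S : Set ℂ)ᶜ))
    (b d : ℝ) (hb : 2 < b) (hd : 0 ≤ d)
    (hdecay : ∀ z ∈ Ω, z ∉ closure QSet →
      (1 + ‖z‖) ^ b * ‖ϕ z‖ ≤ d)
    (hsum : ∀ z ∈ Ω \ SLat S,
      Summable (fun p : ℤ × ℤ => ‖ϕ (z - latPt p)‖))
    (hnz : ∀ z ∈ closure Ω \ SLat S, (∑' p : ℤ × ℤ, ϕ (z - latPt p)) ≠ 0)
    (hlb : ∃ c > (0:ℝ), ∀ z ∈ Ω \ SLat S,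
      c ≤ ‖∑' p : ℤ × ℤ, ϕ (z - latPt p)‖)
    (ϖ : Set ℂ) (hϖopen : IsOpen ϖ) (hϖne : ϖ.Nonempty) (hϖQ : ϖ ⊆ QSet) (hϖΩ : ϖ ⊆ Ω)
    (Ψ : ℝ × ℝ → ℂ → ℂ)
    (hΨana : ∀ η ∈ Set.Icc ((-Real.pi, -Real.pi) : ℝ × ℝ) (Real.pi, Real.pi),
      AnalyticOnNhd ℂ (Ψ η) Ω)
    (hΨeq : ∀ η ∈ Set.Icc ((-Real.pi, -Real.pi) : ℝ × ℝ) (Real.pi, Real.pi),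
      ∀ z ∈ Ω \ SLat S,
        Ψ η z = (∑' p : ℤ × ℤ, Complex.exp (-Complex.I * Complex.ofReal (η.1 * (latPt p).re + η.2 * (latPt p).im)) * ϕ (z - latPt p)) /
          (∑' p : ℤ × ℤ, ϕ (z - latPt p))) :
    ∃ β > (0:ℝ), ∃ C > (0:ℝ),
      ∀ η ∈ Set.Icc ((-Real.pi, -Real.pi) : ℝ × ℝ) (Real.pi, Real.pi),
        (∀ z ∈ Ω, ‖Ψ η z‖ ≤ C) ∧
        (∀ z ∈ ϖ, ‖Ψ η z - 1‖ ≤ C * (η.1 ^ 2 + η.2 ^ 2) ^ (β / 2)) := by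
  classical
  obtain ⟨c, hc, hlb'⟩ := hlb
  set β : ℝ := min 1 ((b-2)/2) with hβdef
  have hβpos : 0 < β := lt_min one_pos (by linarith)
  have hβ1 : β ≤ 1 := min_le_left _ _
  have hbβ : 2 < b - β := by
    have := min_le_right (1:ℝ) ((b-2)/2); linarith
  have hb0 : (0:ℝ) < b := by linarith
  -- safety radius around S inside Q
  obtain ⟨ε, hε, hεQ⟩ : ∃ ε > (0:ℝ), ∀ s ∈ S, Metric.ball s ε ⊆ QSet := by
    obtain ⟨δ, hδ, hδsub⟩ :=
      S.finite_toSet.isCompact.exists_thickening_subset_open isOpen_QSet hSQ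
    exact ⟨δ, hδ, fun s hs x hx =>
      hδsub (Metric.mem_thickening_iff.2 ⟨s, hs, Metric.mem_ball.1 hx⟩)⟩
  -- compact bound for ϕ away from S
  set K : Set ℂ := Metric.closedBall (0:ℂ) 2 \ ⋃ s ∈ (S : Set ℂ), Metric.ball s ε with hK
  have hKc : IsCompact K :=
    (isCompact_closedBall _ _).diff (isOpen_biUnion fun s _ => Metric.isOpen_ball)
  have hKS : K ⊆ ((S : Set ℂ))ᶜ := by
    intro w hw hwS
    exact hw.2 (Set.mem_biUnion hwS (Metric.mem_ball_self hε))
  obtain ⟨M₂, hM₂⟩ := hKc.exists_bound_of_continuousOn (hana.continuousOn.mono hKS)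
  set D : ℝ := max d ((max M₂ 0) * 3 ^ b) with hDdef
  have hD0 : 0 ≤ D := le_trans hd (le_max_left _ _)
  have hΩsub : ∀ z ∈ Ω, ∀ p : ℤ × ℤ, z - latPt p ∈ Ω := by
    intro z hz p
    have := hper z hz (-p)
    rwa [latPt_neg, ← sub_eq_add_neg] at this
  -- pointwise decay bound for ϕ outside Q
  have keyϕ : ∀ z ∈ Ω, ∀ p : ℤ × ℤ, z - latPt p ∉ QSet →
      ‖ϕ (z - latPt p)‖ ≤ D * (1 + ‖z - latPt p‖) ^ (-b) := by
    intro z hz p hpQ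
    set w := z - latPt p with hwdef
    have hwΩ : w ∈ Ω := hΩsub z hz p
    have hw0 : (0:ℝ) < 1 + ‖w‖ := by positivity
    by_cases hw : w ∈ closure QSet
    · have habs : ‖w‖ ≤ 2 := abs_le_two_of_mem_closure_QSet hw
      have hwK : w ∈ K := by
        constructor
        · simp only [Metric.mem_closedBall, Complex.dist_eq, sub_zero]
          exact habs
        · intro hmem
          obtain ⟨s, hs, hws⟩ := Set.mem_iUnion₂.1 hmem
          exact hpQ (hεQ s hs hws)
      have h1 : ‖ϕ w‖ ≤ max M₂ 0 := by
        have := hM₂ w hwK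
        exact le_trans this (le_max_left _ _)
      have h2 : (3:ℝ)^(-b) ≤ (1 + ‖w‖)^(-b) :=
        Real.rpow_le_rpow_of_nonpos hw0 (by linarith) (by linarith)
      calc ‖ϕ w‖ ≤ max M₂ 0 := h1
        _ = (max M₂ 0) * 3^b * 3^(-b) := by
            rw [mul_assoc, ← Real.rpow_add (by norm_num : (0:ℝ) < 3)]
            simp
        _ ≤ D * (1 + ‖w‖)^(-b) := by
            apply mul_le_mul (le_max_right _ _) h2 (by positivity) hD0
    · have hdec := hdecay w hwΩ hw
      have h1 : ‖ϕ w‖ ≤ d * (1 + ‖w‖)^(-b) := by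
        rw [Real.rpow_neg hw0.le, ← div_eq_mul_inv, le_div_iff₀ (Real.rpow_pos_of_pos hw0 b)]
        linarith [hdec]
      exact le_trans h1 (mul_le_mul_of_nonneg_right (le_max_left _ _) (by positivity))
  -- master bound relative to nearest lattice point
  have master : ∀ z ∈ Ω, ∀ p : ℤ × ℤ, p ≠ (⌊z.re⌋, ⌊z.im⌋) →
      ‖ϕ (z - latPt p)‖ ≤
        (D * 4 ^ b) * (1 + ‖latPt (p - (⌊z.re⌋, ⌊z.im⌋))‖) ^ (-b) := by
    intro z hz p hp
    set p₀ : ℤ × ℤ := (⌊z.re⌋, ⌊z.im⌋) with hp₀def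
    set t := ‖latPt (p - p₀)‖ with htdef
    have hq0 : p - p₀ ≠ 0 := sub_ne_zero.2 hp
    have ht1 : 1 ≤ t := one_le_abs_latPt hq0
    have hwQ : z - latPt p ∉ QSet := fun h => hp (floor_unique h)
    have hdist : t ≤ ‖z - latPt p‖ + 2 := by
      have e : latPt (p - p₀) = (z - latPt p₀) - (z - latPt p) := by
        rw [latPt_sub]; ring
      calc t = ‖(z - latPt p₀) - (z - latPt p)‖ := by rw [htdef, e]
        _ ≤ ‖z - latPt p₀‖ + ‖z - latPt p‖ := by
            have := norm_sub_le (z - latPt p₀) (z - latPt p)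
            simpa using this
        _ ≤ 2 + ‖z - latPt p‖ := by
            have := abs_sub_floorPt z; linarith
        _ = ‖z - latPt p‖ + 2 := by ring
    have hchain : (1+t)/4 ≤ 1 + ‖z - latPt p‖ :=
      chain_ineq ht1 (by linarith) (norm_nonneg _)
    have h1 := keyϕ z hz p hwQ
    have h2 : (1 + ‖z - latPt p‖)^(-b) ≤ ((1+t)/4)^(-b) :=
      Real.rpow_le_rpow_of_nonpos (by positivity) hchain (by linarith)
    have h3 : ((1+t)/4)^(-b) = 4^b * (1+t)^(-b) := by
      rw [Real.div_rpow (by positivity) (by norm_num : (0:ℝ) ≤ 4),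
        Real.rpow_neg (by norm_num : (0:ℝ) ≤ 4), div_eq_mul_inv, inv_inv]
      ring
    calc ‖ϕ (z - latPt p)‖ ≤ D * (1 + ‖z - latPt p‖)^(-b) := h1
      _ ≤ D * ((1+t)/4)^(-b) := mul_le_mul_of_nonneg_left h2 hD0
      _ = (D*4^b) * (1+t)^(-b) := by rw [h3]; ring
  -- lattice sums
  have hb2 : (1:ℝ) < b/2 := by linarith
  have hr2 : (1:ℝ) < (b - β)/2 := by linarith
  set Sig1 : ℝ := ∑' q : ℤ × ℤ, ((1:ℝ)+|(q.1:ℝ)|)^(-(b/2)) * ((1:ℝ)+|(q.2:ℝ)|)^(-(b/2)) with hSig1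
  set Sig2 : ℝ := ∑' q : ℤ × ℤ, ((1:ℝ)+|(q.1:ℝ)|)^(-((b-β)/2)) * ((1:ℝ)+|(q.2:ℝ)|)^(-((b-β)/2)) with hSig2
  have hSig10 : 0 ≤ Sig1 := tsum_nonneg (fun q => G_nonneg q)
  have hSig20 : 0 ≤ Sig2 := tsum_nonneg (fun q => G_nonneg q)
  set M : ℝ := (D * 4^b) * Sig1 with hM
  have hM0 : 0 ≤ M := mul_nonneg (by positivity) hSig10
  have hD4 : (0:ℝ) ≤ D * 4^b := by positivity
  set C : ℝ := 3 + 3*M/c + 4*(D*4^b)*Sig2/c + 1 with hC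
  have hX1 : 0 ≤ 3*M/c := div_nonneg (by linarith) hc.le
  have hX2 : 0 ≤ 4*(D*4^b)*Sig2/c := div_nonneg (by positivity) hc.le
  have hC0 : 0 < C := by rw [hC]; linarith
  -- density helper
  have hdenseU : ∀ U : Set ℂ, IsOpen U → ∀ z ∈ U, (𝓝[U \ SLat S] z).NeBot := by
    intro U hU z hz
    have hdc : Dense (SLat S)ᶜ := (countable_SLat S).dense_compl ℂ
    have h1 : NeBot (𝓝[(SLat S)ᶜ] z) := mem_closure_iff_nhdsWithin_neBot.1 (hdc z)
    have he : U \ SLat S = (SLat S)ᶜ ∩ U := by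
      ext w; simp [Set.mem_diff, and_comm]
    rw [he, ← nhdsWithin_restrict' _ (hU.mem_nhds hz)]
    exact h1
  -- Part 1 core bound on Ω \ SLat S
  have part1 : ∀ η ∈ Set.Icc ((-Real.pi, -Real.pi) : ℝ × ℝ) (Real.pi, Real.pi),
      ∀ z ∈ Ω \ SLat S, ‖Ψ η z‖ ≤ C := by
    intro η hη z hz
    obtain ⟨hzΩ, hzS⟩ := hz
    set p₀ : ℤ × ℤ := (⌊z.re⌋, ⌊z.im⌋) with hp₀def
    have hsz := hsum z ⟨hzΩ, hzS⟩
    have hsummand_eq : ∀ p : ℤ × ℤ,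
        ‖eFun η p * ϕ (z - latPt p)‖ = ‖ϕ (z - latPt p)‖ := by
      intro p
      rw [norm_mul, abs_eFun, one_mul]
    have hNsum : Summable (fun p : ℤ × ℤ => eFun η p * ϕ (z - latPt p)) :=
      Summable.of_norm (hsz.congr fun p => (hsummand_eq p).symm)
    have hDsum : Summable (fun p : ℤ × ℤ => ϕ (z - latPt p)) :=
      Summable.of_norm (hsz.congr fun p => rfl)
    set T : ℝ := ∑' p : ℤ × ℤ, (if p = p₀ then 0 else ‖ϕ (z - latPt p)‖) with hT
    have hTsum : Summable (fun p : ℤ × ℤ =>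
        if p = p₀ then (0:ℝ) else ‖ϕ (z - latPt p)‖) := by
      apply Summable.of_nonneg_of_le (fun p => ?_) (fun p => ?_) hsz
      · split
        · exact le_refl _
        · exact norm_nonneg _
      · split
        · exact norm_nonneg _
        · exact le_refl _
    have hGsum : Summable (fun p : ℤ × ℤ =>
        (D*4^b) * (((1:ℝ)+|((p-p₀).1:ℝ)|)^(-(b/2)) * ((1:ℝ)+|((p-p₀).2:ℝ)|)^(-(b/2)))) := by
      apply Summable.mul_left
      exact ((Equiv.subRight p₀).summable_iff).2 (summable_G hb2)
    have hTle : T ≤ M := by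
      rw [hT, hM]
      calc (∑' p : ℤ × ℤ, (if p = p₀ then 0 else ‖ϕ (z - latPt p)‖))
          ≤ ∑' p : ℤ × ℤ, (D*4^b) *
              (((1:ℝ)+|((p-p₀).1:ℝ)|)^(-(b/2)) * ((1:ℝ)+|((p-p₀).2:ℝ)|)^(-(b/2))) := by
            apply Summable.tsum_le_tsum _ hTsum hGsum
            intro p
            by_cases hp : p = p₀
            · simp only [hp, if_pos rfl]
              exact mul_nonneg hD4 (G_nonneg _)
            · rw [if_neg hp]
              calc ‖ϕ (z - latPt p)‖
                  ≤ (D*4^b) * (1 + ‖latPt (p - p₀)‖)^(-b) := master z hzΩ p hp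
                _ ≤ (D*4^b) * (((1:ℝ)+|((p-p₀).1:ℝ)|)^(-(b/2)) * ((1:ℝ)+|((p-p₀).2:ℝ)|)^(-(b/2))) := by
                    apply mul_le_mul_of_nonneg_left _ hD4
                    exact G_bound hb0 (p - p₀)
        _ = (D*4^b) * ∑' p : ℤ × ℤ,
              (((1:ℝ)+|((p-p₀).1:ℝ)|)^(-(b/2)) * ((1:ℝ)+|((p-p₀).2:ℝ)|)^(-(b/2))) := tsum_mul_left
        _ = (D*4^b) * Sig1 := by
            rw [hSig1]
            congr 1
            exact (Equiv.subRight p₀).tsum_eq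
              (fun q : ℤ × ℤ => ((1:ℝ)+|(q.1:ℝ)|)^(-(b/2)) * ((1:ℝ)+|(q.2:ℝ)|)^(-(b/2)))
    set t₀ : ℝ := ‖ϕ (z - latPt p₀)‖ with ht₀
    have htsum_split : (∑' p : ℤ × ℤ, ‖ϕ (z - latPt p)‖) = t₀ + T :=
      Summable.tsum_eq_add_tsum_ite hsz p₀
    set N : ℂ := ∑' p : ℤ × ℤ, eFun η p * ϕ (z - latPt p) with hN
    set Dn : ℂ := ∑' p : ℤ × ℤ, ϕ (z - latPt p) with hDn
    have hNle : ‖N‖ ≤ t₀ + T := by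
      rw [← htsum_split]
      calc ‖N‖ ≤ ∑' p : ℤ × ℤ, ‖eFun η p * ϕ (z - latPt p)‖ :=
            norm_tsum_le_tsum_norm (hsz.congr fun p => (hsummand_eq p).symm)
        _ = ∑' p : ℤ × ℤ, ‖ϕ (z - latPt p)‖ := tsum_congr hsummand_eq
    have hclb : c ≤ ‖Dn‖ := hlb' z ⟨hzΩ, hzS⟩
    have hDlb : t₀ - T ≤ ‖Dn‖ := by
      set R : ℂ := ∑' p : ℤ × ℤ, (if p = p₀ then 0 else ϕ (z - latPt p)) with hR
      have split2 : Dn = ϕ (z - latPt p₀) + R :=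
        Summable.tsum_eq_add_tsum_ite hDsum p₀
      have hrest : ‖R‖ ≤ T := by
        rw [hR]
        rw [hT]
        calc ‖∑' p : ℤ × ℤ, (if p = p₀ then (0:ℂ) else ϕ (z - latPt p))‖
            ≤ ∑' p : ℤ × ℤ, ‖(if p = p₀ then (0:ℂ) else ϕ (z - latPt p))‖ := by
              apply norm_tsum_le_tsum_norm
              apply hTsum.congr
              intro p
              split <;> simp
          _ = ∑' p : ℤ × ℤ, (if p = p₀ then (0:ℝ) else ‖ϕ (z - latPt p)‖) := by
              apply tsum_congr
              intro p
              split <;> simp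
      have key : t₀ ≤ ‖ϕ (z - latPt p₀) + R‖ + ‖R‖ := by
        have h := norm_add_le (ϕ (z - latPt p₀) + R) (-R)
        simpa [add_neg_cancel_right] using h
      have hDnR : ‖Dn‖ = ‖ϕ (z - latPt p₀) + R‖ := by rw [split2]
      linarith
    have hΨv : Ψ η z = N / Dn := by
      rw [hΨeq η hη z ⟨hzΩ, hzS⟩]; rfl
    rw [hΨv, norm_div]
    rcases le_or_gt t₀ (2*M) with hcase | hcase
    · have hNle3 : ‖N‖ ≤ 3*M := by linarith
      calc ‖N‖ / ‖Dn‖ ≤ (3*M)/c :=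
            div_le_div₀ (by linarith) hNle3 hc hclb
        _ ≤ C := by rw [hC]; linarith
    · have hpos : 0 < t₀ - M := by linarith
      have hq : ‖N‖ / ‖Dn‖ ≤ (t₀ + M)/(t₀ - M) :=
        div_le_div₀ (by linarith) (by linarith) hpos (by linarith)
      have h3 : (t₀ + M)/(t₀ - M) ≤ 3 := by
        rw [div_le_iff₀ hpos]; linarith
      calc ‖N‖ / ‖Dn‖ ≤ 3 := le_trans hq h3
        _ ≤ C := by rw [hC]; linarith
  -- Part 2 core bound on ϖ \ SLat S
  have part2 : ∀ η ∈ Set.Icc ((-Real.pi, -Real.pi) : ℝ × ℝ) (Real.pi, Real.pi),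
      ∀ z ∈ ϖ \ SLat S, ‖Ψ η z - 1‖ ≤ C * (η.1^2 + η.2^2)^(β/2) := by
    intro η hη z hz
    obtain ⟨hzϖ, hzS⟩ := hz
    have hzQ : z ∈ QSet := hϖQ hzϖ
    have hzΩ : z ∈ Ω := hϖΩ hzϖ
    have hp₀ : ((⌊z.re⌋, ⌊z.im⌋) : ℤ × ℤ) = 0 := by
      obtain ⟨⟨a1, a2⟩, a3, a4⟩ := hzQ
      have e1 : ⌊z.re⌋ = 0 := by
        rw [Int.floor_eq_zero_iff]; exact ⟨a1.le, a2⟩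
      have e2 : ⌊z.im⌋ = 0 := by
        rw [Int.floor_eq_zero_iff]; exact ⟨a3.le, a4⟩
      rw [e1, e2]; rfl
    set nrm : ℝ := Real.sqrt (η.1^2 + η.2^2) with hnrm
    have hnrm0 : 0 ≤ nrm := Real.sqrt_nonneg _
    have hXeq : (η.1^2 + η.2^2)^(β/2) = nrm^β := by
      rw [show β/2 = (1/2)*β by ring, Real.rpow_mul (by positivity), hnrm,
        Real.sqrt_eq_rpow]
    have hXnn : 0 ≤ nrm^β := Real.rpow_nonneg hnrm0 _
    have hsz := hsum z ⟨hzΩ, hzS⟩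
    have hsummand_eq : ∀ p : ℤ × ℤ,
        ‖eFun η p * ϕ (z - latPt p)‖ = ‖ϕ (z - latPt p)‖ := by
      intro p
      rw [norm_mul, abs_eFun, one_mul]
    have hNsum : Summable (fun p : ℤ × ℤ => eFun η p * ϕ (z - latPt p)) :=
      Summable.of_norm (hsz.congr fun p => (hsummand_eq p).symm)
    have hDsum : Summable (fun p : ℤ × ℤ => ϕ (z - latPt p)) :=
      Summable.of_norm (hsz.congr fun p => rfl)
    set Dn : ℂ := ∑' p : ℤ × ℤ, ϕ (z - latPt p) with hDn
    have hclb : c ≤ ‖Dn‖ := hlb' z ⟨hzΩ, hzS⟩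
    have hDn0 : Dn ≠ 0 := by
      intro h
      rw [h] at hclb
      simp at hclb
      linarith
    have hEbdd : ∀ p : ℤ × ℤ, ‖eFun η p - 1‖ ≤ 2 := by
      intro p
      calc ‖eFun η p - 1‖ ≤ ‖eFun η p‖ + ‖(1:ℂ)‖ := norm_sub_le _ _
        _ = 2 := by rw [abs_eFun]; norm_num
    have hEsumN : Summable (fun p : ℤ × ℤ => ‖(eFun η p - 1) * ϕ (z - latPt p)‖) := by
      apply Summable.of_nonneg_of_le (fun p => norm_nonneg _) (fun p => ?_) (hsz.mul_left 2)
      rw [norm_mul]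
      exact mul_le_mul_of_nonneg_right (hEbdd p) (norm_nonneg _)
    have hterm : ∀ p : ℤ × ℤ,
        ‖(eFun η p - 1) * ϕ (z - latPt p)‖ ≤ (4*(D*4^b)*nrm^β) *
          (((1:ℝ)+|(p.1:ℝ)|)^(-((b-β)/2)) * ((1:ℝ)+|(p.2:ℝ)|)^(-((b-β)/2))) := by
      intro p
      by_cases hp : p = 0
      · subst hp
        rw [eFun_zero]
        simp only [sub_self, zero_mul, norm_zero]
        apply mul_nonneg (by positivity) (G_nonneg _)
      · set θ : ℝ := η.1 * (latPt p).re + η.2 * (latPt p).im with hθdef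
        set t : ℝ := ‖latPt p‖ with htdef
        have ht1 : 1 ≤ t := one_le_abs_latPt hp
        have ht0 : 0 ≤ t := by linarith
        have hθb : |θ| ≤ 2 * nrm * t := by
          have h1 : |η.1| ≤ nrm := by
            rw [hnrm, ← Real.sqrt_sq_eq_abs]
            exact Real.sqrt_le_sqrt (by nlinarith [sq_nonneg η.2])
          have h2 : |η.2| ≤ nrm := by
            rw [hnrm, ← Real.sqrt_sq_eq_abs]
            exact Real.sqrt_le_sqrt (by nlinarith [sq_nonneg η.1])
          have h3 : |(latPt p).re| ≤ t := Complex.abs_re_le_norm _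
          have h4 : |(latPt p).im| ≤ t := Complex.abs_im_le_norm _
          calc |θ| ≤ |η.1 * (latPt p).re| + |η.2 * (latPt p).im| := abs_add_le _ _
            _ = |η.1| * |(latPt p).re| + |η.2| * |(latPt p).im| := by rw [abs_mul, abs_mul]
            _ ≤ nrm * t + nrm * t := add_le_add
                (mul_le_mul h1 h3 (abs_nonneg _) hnrm0)
                (mul_le_mul h2 h4 (abs_nonneg _) hnrm0)
            _ = 2 * nrm * t := by ring
        have hE : ‖eFun η p - 1‖ ≤ 4 * (nrm^β * t^β) := by
          have htβ : (0:ℝ) ≤ t^β := Real.rpow_nonneg ht0 _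
          calc ‖eFun η p - 1‖ ≤ 2 * min 1 |θ| := exp_sub_one_bound θ
            _ ≤ 2 * |θ|^β := by
                apply mul_le_mul_of_nonneg_left (min_le_rpow (abs_nonneg _) hβpos hβ1)
                norm_num
            _ ≤ 2 * (2*nrm*t)^β := by
                apply mul_le_mul_of_nonneg_left
                  (Real.rpow_le_rpow (abs_nonneg _) hθb hβpos.le)
                norm_num
            _ = 2 * (2^β * (nrm^β * t^β)) := by
                rw [show (2:ℝ)*nrm*t = 2*(nrm*t) by ring,
                  Real.mul_rpow (by norm_num) (by positivity),
                  Real.mul_rpow hnrm0 ht0]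
            _ ≤ 2 * (2 * (nrm^β * t^β)) := by
                have h2β : (2:ℝ)^β ≤ 2 := by
                  calc (2:ℝ)^β ≤ (2:ℝ)^(1:ℝ) :=
                        Real.rpow_le_rpow_of_exponent_le one_le_two hβ1
                    _ = 2 := Real.rpow_one 2
                apply mul_le_mul_of_nonneg_left _ (by norm_num : (0:ℝ) ≤ 2)
                exact mul_le_mul_of_nonneg_right h2β (by positivity)
            _ = 4 * (nrm^β * t^β) := by ring
        have hϕb : ‖ϕ (z - latPt p)‖ ≤ (D*4^b) * (1 + t)^(-b) := by
          have := master z hzΩ p (by rw [hp₀]; exact hp)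
          rw [hp₀, sub_zero] at this
          exact this
        have hts : t^β * (1+t)^(-b) ≤
            ((1:ℝ)+|(p.1:ℝ)|)^(-((b-β)/2)) * ((1:ℝ)+|(p.2:ℝ)|)^(-((b-β)/2)) := by
          have e1 : t^β ≤ (1+t)^β := Real.rpow_le_rpow ht0 (by linarith) hβpos.le
          have e2 : (1+t)^β * (1+t)^(-b) = (1+t)^(-(b-β)) := by
            rw [← Real.rpow_add (by positivity)]
            ring_nf
          have e3 : (1+t)^(-(b-β)) ≤
              ((1:ℝ)+|(p.1:ℝ)|)^(-((b-β)/2)) * ((1:ℝ)+|(p.2:ℝ)|)^(-((b-β)/2)) :=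
            G_bound (by linarith) p
          calc t^β * (1+t)^(-b) ≤ (1+t)^β * (1+t)^(-b) := by
                apply mul_le_mul_of_nonneg_right e1 (Real.rpow_nonneg (by positivity) _)
            _ = (1+t)^(-(b-β)) := e2
            _ ≤ _ := e3
        calc ‖(eFun η p - 1) * ϕ (z - latPt p)‖
            = ‖eFun η p - 1‖ * ‖ϕ (z - latPt p)‖ := by
              rw [norm_mul]
          _ ≤ (4 * (nrm^β * t^β)) * ((D*4^b) * (1 + t)^(-b)) := by
              apply mul_le_mul hE hϕb (norm_nonneg _) (by positivity)
          _ = (4*(D*4^b)*nrm^β) * (t^β * (1+t)^(-b)) := by ring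
          _ ≤ (4*(D*4^b)*nrm^β) *
              (((1:ℝ)+|(p.1:ℝ)|)^(-((b-β)/2)) * ((1:ℝ)+|(p.2:ℝ)|)^(-((b-β)/2))) := by
              apply mul_le_mul_of_nonneg_left hts (by positivity)
    have hsubE : (∑' p : ℤ × ℤ, eFun η p * ϕ (z - latPt p)) - Dn
        = ∑' p : ℤ × ℤ, (eFun η p - 1) * ϕ (z - latPt p) := by
      rw [hDn, ← Summable.tsum_sub hNsum hDsum]
      exact tsum_congr fun p => by ring
    have hΨm1 : Ψ η z - 1 = (∑' p : ℤ × ℤ, (eFun η p - 1) * ϕ (z - latPt p)) / Dn := by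
      have h0 : Ψ η z = (∑' p : ℤ × ℤ, eFun η p * ϕ (z - latPt p)) / Dn := by
        rw [hΨeq η hη z ⟨hzΩ, hzS⟩]; rfl
      rw [h0, div_sub_one hDn0, hsubE]
    rw [hΨm1, norm_div]
    have hnum : ‖∑' p : ℤ × ℤ, (eFun η p - 1) * ϕ (z - latPt p)‖ ≤
        (4*(D*4^b)*nrm^β) * Sig2 := by
      calc ‖∑' p : ℤ × ℤ, (eFun η p - 1) * ϕ (z - latPt p)‖
          ≤ ∑' p : ℤ × ℤ, ‖(eFun η p - 1) * ϕ (z - latPt p)‖ := norm_tsum_le_tsum_norm hEsumN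
        _ ≤ ∑' p : ℤ × ℤ, (4*(D*4^b)*nrm^β) *
            (((1:ℝ)+|(p.1:ℝ)|)^(-((b-β)/2)) * ((1:ℝ)+|(p.2:ℝ)|)^(-((b-β)/2))) :=
            Summable.tsum_le_tsum hterm hEsumN ((summable_G hr2).mul_left _)
        _ = (4*(D*4^b)*nrm^β) * Sig2 := by rw [tsum_mul_left, hSig2]
    calc ‖∑' p : ℤ × ℤ, (eFun η p - 1) * ϕ (z - latPt p)‖ / ‖Dn‖
        ≤ ((4*(D*4^b)*nrm^β) * Sig2) / c := by
          apply div_le_div₀ _ hnum hc hclb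
          apply mul_nonneg (by positivity) hSig20
      _ = (4*(D*4^b)*Sig2/c) * nrm^β := by ring
      _ ≤ C * nrm^β := by
          apply mul_le_mul_of_nonneg_right _ hXnn
          rw [hC]; linarith
      _ = C * (η.1^2 + η.2^2)^(β/2) := by rw [hXeq]
  -- conclusion via density
  refine ⟨β, hβpos, C, hC0, fun η hη => ⟨?_, ?_⟩⟩
  · intro z hz
    have hne := hdenseU Ω hΩopen z hz
    have hcwa : ContinuousWithinAt (Ψ η) (Ω \ SLat S) z :=
      ((hΨana η hη z hz).continuousAt).continuousWithinAt
    have htd : Tendsto (fun w => ‖Ψ η w‖) (𝓝[Ω \ SLat S] z)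
        (𝓝 (‖Ψ η z‖)) :=
      (continuous_norm.tendsto _).comp hcwa
    exact le_of_tendsto htd
      (Filter.eventually_of_mem self_mem_nhdsWithin (fun w hw => part1 η hη w hw))
  · intro z hz
    have hzΩ : z ∈ Ω := hϖΩ hz
    have hne := hdenseU ϖ hϖopen z hz
    have hcwa : ContinuousWithinAt (Ψ η) (ϖ \ SLat S) z :=
      ((hΨana η hη z hzΩ).continuousAt).continuousWithinAt
    have htd : Tendsto (fun w => ‖Ψ η w - 1‖) (𝓝[ϖ \ SLat S] z)
        (𝓝 (‖Ψ η z - 1‖)) :=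
      (continuous_norm.tendsto _).comp (hcwa.sub continuousWithinAt_const)
    exact le_of_tendsto htd
      (Filter.eventually_of_mem self_mem_nhdsWithin (fun w hw => part2 η hη w hw))
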